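/- Any crash-fault-tolerant consensus algorithm for n ≥ f + 2 processes tolerating f crash failures requires at least f + 1 rounds in some admissible execution. -/

import Mathlib

open scoped Classical

/-- A deterministic synchronous full-information message-passing protocol for
`n` processes.  Each process starts in a state determined by its Boolean
input; in every round each process sends a message to every other process
(computed from its current state) and then updates its state from the
messages it received (`none` encodes a missing message from a crashed
process); at any time it may have decided a Boolean value, read off by
`output`. -/
structure SyncProtocol (n : ℕ) where
  State : Type
  Msg : Type
  init : Fin n → Bool → State
  send : Fin n → State → Fin n → Msg
  step : Fin n → State → (Fin n → Option Msg) → State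
  output : State → Option Bool

/-- A crash-failure pattern: `crash p = some r` means process `p` crashes in
round `r` (rounds are numbered `1, 2, …`); in its crashing round an
adversarially chosen subset of its messages is delivered (`deliv p q` holds
iff `p`'s crashing-round message to `q` is delivered) and it is silent in all
later rounds. -/
structure FailPattern (n : ℕ) where
  crash : Fin n → Option ℕ
  deliv : Fin n → Fin n → Prop

/-- Whether sender `p`'s message to `q` in round `r` is delivered. -/
def FailPattern.ok {n : ℕ} (F : FailPattern n) (p q : Fin n) (r : ℕ) : Prop :=
  match F.crash p with
  | none => True
  | some rc => r < rc ∨ (r = rc ∧ F.deliv p q)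

/-- Process `p` is non-faulty in the pattern `F`. -/
def FailPattern.Nonfaulty {n : ℕ} (F : FailPattern n) (p : Fin n) : Prop :=
  F.crash p = none

/-- The number of processes that crash in the pattern `F`. -/
noncomputable def FailPattern.numFaulty {n : ℕ} (F : FailPattern n) : ℕ :=
  (Finset.univ.filter (fun p => F.crash p ≠ none)).card

/-- The state of process `p` at the end of round `r` in the execution of
protocol `P` with inputs `x` and failure pattern `F`. -/
noncomputable def run {n : ℕ} (P : SyncProtocol n) (x : Fin n → Bool)
    (F : FailPattern n) : ℕ → Fin n → P.State
  | 0, p => P.init p (x p)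
  | r + 1, p =>
      P.step p (run P x F r p)
        (fun q => if F.ok q p (r + 1) then some (P.send q (run P x F r q) p)
                  else none)

/-- Protocol `P` solves consensus for `n` processes tolerating `f` crash
failures within `R` rounds: in every admissible execution (at most `f`
crashes), by the end of round `R` every non-faulty process has decided
(termination), all non-faulty processes decide the same value (agreement),
and any decided value is some process's input (validity). -/
def SolvesConsensus {n : ℕ} (P : SyncProtocol n) (f R : ℕ) : Prop :=
  ∀ (x : Fin n → Bool) (F : FailPattern n), F.numFaulty ≤ f →
    (∀ p, F.Nonfaulty p → ∃ b, P.output (run P x F R p) = some b) ∧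
    (∀ p q bp bq, F.Nonfaulty p → F.Nonfaulty q →
      P.output (run P x F R p) = some bp →
      P.output (run P x F R q) = some bq → bp = bq) ∧
    (∀ p b, F.Nonfaulty p → P.output (run P x F R p) = some b → ∃ q, x q = b)
namespace LB

variable {n : ℕ}

lemma run_zero (P : SyncProtocol n) (x : Fin n → Bool) (F : FailPattern n) (p : Fin n) :
    run P x F 0 p = P.init p (x p) := rfl

lemma run_succ (P : SyncProtocol n) (x : Fin n → Bool) (F : FailPattern n) (r : ℕ) (p : Fin n) :
    run P x F (r + 1) p = P.step p (run P x F r p)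
      (fun q => if F.ok q p (r + 1) then some (P.send q (run P x F r q) p) else none) := rfl

/-- The decision value of an execution. -/
noncomputable def dec (P : SyncProtocol n) (R : ℕ) (x : Fin n → Bool) (F : FailPattern n) : Bool :=
  if ∃ p, F.Nonfaulty p ∧ P.output (run P x F R p) = some true then true else false

lemma dec_spec {P : SyncProtocol n} {f R : ℕ} (hP : SolvesConsensus P f R)
    {x : Fin n → Bool} {F : FailPattern n} (hF : F.numFaulty ≤ f)
    {p : Fin n} (hp : F.Nonfaulty p) :
    P.output (run P x F R p) = some (dec P R x F) := by
  obtain ⟨b, hb⟩ := (hP x F hF).1 p hp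
  cases b with
  | true =>
    have : dec P R x F = true := by
      simp only [dec, if_pos (⟨p, hp, hb⟩ : ∃ p, F.Nonfaulty p ∧ P.output (run P x F R p) = some true)]
    rw [this]; exact hb
  | false =>
    have : dec P R x F = false := by
      simp only [dec, ite_eq_right_iff]
      rintro ⟨q, hq, hq'⟩
      exact absurd ((hP x F hF).2.1 p q false true hp hq hb hq') (by simp)
    rw [this]; exact hb

lemma numFaulty_lt (F : FailPattern n) {f : ℕ} (hF : F.numFaulty ≤ f) (hn : f < n) :
    ∃ p, F.Nonfaulty p := by
  by_contra h
  push_neg at h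
  have : (Finset.univ.filter (fun p => F.crash p ≠ none)) = Finset.univ := by
    apply Finset.eq_univ_of_forall
    intro p
    simp only [Finset.mem_filter, Finset.mem_univ, true_and]
    exact h p
  have hcard : F.numFaulty = n := by
    rw [FailPattern.numFaulty, this, Finset.card_univ, Fintype.card_fin]
  omega

lemma exists_nonfaulty_ne (F : FailPattern n) {f : ℕ} (hF : F.numFaulty ≤ f)
    (hn : f + 1 < n) (z : Fin n) : ∃ w, w ≠ z ∧ F.Nonfaulty w := by
  classical
  have hsplit := Finset.card_filter_add_card_filter_not
    (s := (Finset.univ : Finset (Fin n))) (p := fun p => F.crash p ≠ none)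
  have hcard : 1 < (Finset.univ.filter (fun p => ¬ F.crash p ≠ none)).card := by
    have : (Finset.univ.filter (fun p => F.crash p ≠ none)).card = F.numFaulty := rfl
    rw [Finset.card_univ, Fintype.card_fin] at hsplit
    omega
  obtain ⟨w, hw, hwz⟩ := Finset.exists_mem_ne hcard z
  simp only [Finset.mem_filter, not_not] at hw
  exact ⟨w, hwz, hw.2⟩

/-- If two failure patterns deliver the same messages through round `N`,
the states through round `N` agree. -/
lemma run_ok_eq (P : SyncProtocol n) (x : Fin n → Bool) {F F' : FailPattern n} {N : ℕ}
    (h : ∀ p q r, 1 ≤ r → r ≤ N → (F.ok p q r ↔ F'.ok p q r)) :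
    ∀ r, r ≤ N → ∀ p, run P x F r p = run P x F' r p := by
  intro r
  induction r with
  | zero => intro _ p; rfl
  | succ r ih =>
    intro hr p
    rw [run_succ, run_succ, ih (by omega) p]
    congr 1
    funext q
    rw [ih (by omega) q]
    by_cases hok : F'.ok q p (r + 1)
    · rw [if_pos hok, if_pos ((h q p (r+1) (by omega) hr).2 hok)]
    · rw [if_neg hok, if_neg (fun hc => hok ((h q p (r+1) (by omega) hr).1 hc))]

/-- Master indistinguishability lemma: if the two executions can differ only
in the input of `z`, in messages delivered to `z` from round `m` on, and `z`
is silent after round `m` in both, then all processes other than `z` have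
identical states through round `N` (and `z` itself through round `m - 1`). -/
lemma master (P : SyncProtocol n) (x x' : Fin n → Bool) (F F' : FailPattern n)
    (z : Fin n) (m N : ℕ)
    (Hx : ∀ p, p ≠ z → x p = x' p) (Hxz : 0 < m → x z = x' z)
    (Hb : ∀ p q r, p ≠ z → q ≠ z → 1 ≤ r → r ≤ N → (F.ok p q r ↔ F'.ok p q r))
    (Hc : ∀ q r, q ≠ z → 1 ≤ r → r ≤ m → r ≤ N → (F.ok z q r ↔ F'.ok z q r))
    (Hd : ∀ q r, q ≠ z → m < r → r ≤ N → ¬F.ok z q r ∧ ¬F'.ok z q r)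
    (He : ∀ p r, 1 ≤ r → r < m → r ≤ N → (F.ok p z r ↔ F'.ok p z r)) :
    ∀ r, r ≤ N →
      (∀ p, p ≠ z → run P x F r p = run P x' F' r p) ∧
      (r < m → run P x F r z = run P x' F' r z) := by
  intro r
  induction r with
  | zero =>
    intro _
    refine ⟨fun p hp => ?_, fun hm => ?_⟩
    · rw [run_zero, run_zero, Hx p hp]
    · rw [run_zero, run_zero, Hxz hm]
  | succ r ih =>
    intro hr
    obtain ⟨ih1, ih2⟩ := ih (by omega)
    constructor
    · intro p hp
      rw [run_succ, run_succ, ih1 p hp]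
      congr 1
      funext q
      by_cases hq : q = z
      · subst hq
        by_cases hm : r + 1 ≤ m
        · rw [ih2 (by omega)]
          by_cases hok : F'.ok q p (r + 1)
          · rw [if_pos hok, if_pos ((Hc p (r+1) hp (by omega) hm hr).2 hok)]
          · rw [if_neg hok, if_neg (fun hc => hok ((Hc p (r+1) hp (by omega) hm hr).1 hc))]
        · obtain ⟨h1, h2⟩ := Hd p (r+1) hp (by omega) hr
          rw [if_neg h1, if_neg h2]
      · rw [ih1 q hq]
        by_cases hok : F'.ok q p (r + 1)
        · rw [if_pos hok, if_pos ((Hb q p (r+1) hq hp (by omega) hr).2 hok)]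
        · rw [if_neg hok, if_neg (fun hc => hok ((Hb q p (r+1) hq hp (by omega) hr).1 hc))]
    · intro hm
      rw [run_succ, run_succ, ih2 (by omega)]
      congr 1
      funext q
      have hcont : run P x F r q = run P x' F' r q := by
        by_cases hq : q = z
        · subst hq; exact ih2 (by omega)
        · exact ih1 q hq
      rw [hcont]
      by_cases hok : F'.ok q z (r + 1)
      · rw [if_pos hok, if_pos ((He q (r+1) (by omega) (by omega) hr).2 hok)]
      · rw [if_neg hok, if_neg (fun hc => hok ((He q (r+1) (by omega) (by omega) hr).1 hc))]

lemma dec_eq_common {P : SyncProtocol n} {f R : ℕ} (hP : SolvesConsensus P f R)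
    {x x' : Fin n → Bool} {F F' : FailPattern n}
    (hF : F.numFaulty ≤ f) (hF' : F'.numFaulty ≤ f) {w : Fin n}
    (hw : F.Nonfaulty w) (hw' : F'.Nonfaulty w)
    (hrun : run P x F R w = run P x' F' R w) :
    dec P R x F = dec P R x' F' := by
  have h1 := dec_spec hP hF hw (x := x)
  have h2 := dec_spec hP hF' hw' (x := x')
  rw [hrun, h2] at h1
  exact (Option.some.injEq _ _ ▸ h1).symm

end LB
namespace LB

variable {n : ℕ}

/-- All crashes in `F` occur by round `k`. -/
def Finished (F : FailPattern n) (k : ℕ) : Prop :=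
  ∀ p r, F.crash p = some r → r ≤ k

/-- `G` is a failure-sparse extension of `F` after round `k` (within `R` rounds):
it keeps all crashes of `F` (with the same delivery behaviour) and adds new
crashes only at rounds in `(k, R]`, at most one per round. -/
structure SExt (F G : FailPattern n) (k R : ℕ) : Prop where
  old : ∀ p r, F.crash p = some r → G.crash p = some r
  olddel : ∀ p r q, F.crash p = some r → (G.deliv p q ↔ F.deliv p q)
  new : ∀ p r, F.crash p = none → G.crash p = some r → k < r ∧ r ≤ R
  sparse : ∀ p q r, F.crash p = none → F.crash q = none →
    G.crash p = some r → G.crash q = some r → p = q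

lemma SExt.refl (F : FailPattern n) (k R : ℕ) : SExt F F k R := by
  refine ⟨fun p r h => h, fun p r q _ => Iff.rfl, fun p r h h' => absurd h' (by simp [h]), ?_⟩
  intro p q r hp _ hp' _
  exact absurd hp' (by simp [hp])

lemma SExt.nonfaulty {F G : FailPattern n} {k R : ℕ} (h : SExt F G k R) {p : Fin n}
    (hp : G.Nonfaulty p) : F.Nonfaulty p := by
  rcases hF : F.crash p with _ | r
  · exact hF
  · exact absurd (h.old p r hF) (by rw [hp]; simp)

lemma SExt.ok_agree {F G : FailPattern n} {k R : ℕ} (h : SExt F G k R) :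
    ∀ p q r, r ≤ k → (F.ok p q r ↔ G.ok p q r) := by
  intro p q r hr
  rcases hF : F.crash p with _ | rc
  · rcases hG : G.crash p with _ | rc'
    · simp [FailPattern.ok, hF, hG]
    · have := (h.new p rc' hF hG).1
      simp only [FailPattern.ok, hF, hG]
      constructor
      · intro _; left; omega
      · intro _; trivial
  · have hG := h.old p rc hF
    have hdel := h.olddel p rc q hF
    simp only [FailPattern.ok, hF, hG]
    constructor
    · rintro (h1 | ⟨h1, h2⟩)
      · exact Or.inl h1
      · exact Or.inr ⟨h1, hdel.2 h2⟩
    · rintro (h1 | ⟨h1, h2⟩)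
      · exact Or.inl h1
      · exact Or.inr ⟨h1, hdel.1 h2⟩

/-- An extension after round `R` adds no crashes at all. -/
lemma SExt.crash_eq_of_top {F G : FailPattern n} {R : ℕ} (h : SExt F G R R) :
    ∀ p, G.crash p = F.crash p := by
  intro p
  rcases hF : F.crash p with _ | rc
  · rcases hG : G.crash p with _ | rc'
    · rfl
    · have := h.new p rc' hF hG; omega
  · exact h.old p rc hF

lemma SExt.trans {F F₁ G : FailPattern n} {k k' R : ℕ} (hk : k ≤ k')
    (h1 : SExt F F₁ k R) (hfin : Finished F₁ k') (h2 : SExt F₁ G k' R) :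
    SExt F G k R := by
  refine ⟨?_, ?_, ?_, ?_⟩
  · intro p r h; exact h2.old p r (h1.old p r h)
  · intro p r q h
    exact (h2.olddel p r q (h1.old p r h)).trans (h1.olddel p r q h)
  · intro p r hF hG
    rcases h1F : F₁.crash p with _ | r1
    · have := h2.new p r h1F hG; omega
    · have := h1.new p r1 hF h1F
      have := h2.old p r1 h1F
      rw [this] at hG
      cases hG
      omega
  · intro p q r hFp hFq hGp hGq
    rcases h1p : F₁.crash p with _ | rp <;> rcases h1q : F₁.crash q with _ | rq
    · exact h2.sparse p q r h1p h1q hGp hGq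
    · -- p new in G rel F₁, q crashed in F₁
      have hq' := h2.old q rq h1q
      rw [hq'] at hGq; cases hGq
      have := h2.new p r h1p hGp
      have := hfin q r h1q
      omega
    · have hp' := h2.old p rp h1p
      rw [hp'] at hGp; cases hGp
      have := h2.new q r h1q hGq
      have := hfin p r h1p
      omega
    · have hp' := h2.old p rp h1p
      have hq' := h2.old q rq h1q
      rw [hp'] at hGp; rw [hq'] at hGq
      cases hGp; cases hGq
      exact h1.sparse p q r hFp hFq h1p h1q

/-- Truncation of a pattern to crashes occurring by round `m`. -/
def trunc (G : FailPattern n) (m : ℕ) : FailPattern n where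
  crash := fun p => match G.crash p with
    | some r => if r ≤ m then some r else none
    | none => none
  deliv := G.deliv

lemma trunc_crash_some {G : FailPattern n} {m : ℕ} {p : Fin n} {r : ℕ}
    (h : (trunc G m).crash p = some r) : G.crash p = some r ∧ r ≤ m := by
  rcases hG : G.crash p with _ | rc
  · simp [trunc, hG] at h
  · simp only [trunc, hG] at h
    by_cases hle : rc ≤ m
    · rw [if_pos hle] at h; cases h; exact ⟨rfl, hle⟩
    · rw [if_neg hle] at h; cases h

lemma trunc_crash_none {G : FailPattern n} {m : ℕ} {p : Fin n}
    (h : (trunc G m).crash p = none) : G.crash p = none ∨ ∃ r, G.crash p = some r ∧ m < r := by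
  rcases hG : G.crash p with _ | rc
  · exact Or.inl rfl
  · right
    refine ⟨rc, rfl, ?_⟩
    by_contra hle
    simp only [trunc, hG, if_pos (by omega : rc ≤ m)] at h
    exact (by cases h)

lemma trunc_finished (G : FailPattern n) (m : ℕ) : Finished (trunc G m) m :=
  fun p r h => (trunc_crash_some h).2

lemma sext_trunc {F G : FailPattern n} {k R : ℕ} (h : SExt F G k R)
    (hfin : Finished F k) (hkR : k + 1 ≤ R) :
    SExt F (trunc G (k+1)) k R ∧ SExt (trunc G (k+1)) G (k+1) R := by
  constructor
  · refine ⟨?_, ?_, ?_, ?_⟩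
    · intro p r hF
      have hG := h.old p r hF
      have hr := hfin p r hF
      simp [trunc, hG, if_pos (by omega : r ≤ k + 1)]
    · intro p r q hF; exact h.olddel p r q hF
    · intro p r hF hT
      obtain ⟨hG, _⟩ := trunc_crash_some hT
      exact h.new p r hF hG
    · intro p q r hFp hFq hTp hTq
      exact h.sparse p q r hFp hFq (trunc_crash_some hTp).1 (trunc_crash_some hTq).1
  · refine ⟨?_, ?_, ?_, ?_⟩
    · intro p r hT; exact (trunc_crash_some hT).1
    · intro p r q _; exact Iff.rfl
    · intro p r hT hG
      rcases trunc_crash_none hT with h0 | ⟨r', hr', hm⟩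
      · rw [h0] at hG; cases hG
      · rw [hr'] at hG
        injection hG with hG
        subst hG
        refine ⟨hm, ?_⟩
        rcases hF : F.crash p with _ | rc
        · exact (h.new p r' hF hr').2
        · have hco := h.old p rc hF
          rw [hco] at hr'
          injection hr' with hr'
          have := hfin p rc hF; omega
    · intro p q r hTp hTq hGp hGq
      have hFp : F.crash p = none := by
        rcases hF : F.crash p with _ | rc
        · rfl
        · have hG := h.old p rc hF
          have hr := hfin p rc hF
          simp [trunc, hG, if_pos (by omega : rc ≤ k + 1)] at hTp
      have hFq : F.crash q = none := by
        rcases hF : F.crash q with _ | rc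
        · rfl
        · have hG := h.old q rc hF
          have hr := hfin q rc hF
          simp [trunc, hG, if_pos (by omega : rc ≤ k + 1)] at hTq
      exact h.sparse p q r hFp hFq hGp hGq

/-- Crash a (fresh) process `z` at round `r0` delivering exactly to `S`. -/
def Fcr (F : FailPattern n) (z : Fin n) (S : Fin n → Prop) (r0 : ℕ) : FailPattern n where
  crash := fun p => if p = z then some r0 else F.crash p
  deliv := fun p q => if p = z then S q else F.deliv p q

lemma numFaulty_Fcr_le (F : FailPattern n) (z : Fin n) (S : Fin n → Prop) (r0 : ℕ) :
    (Fcr F z S r0).numFaulty ≤ F.numFaulty + 1 := by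
  classical
  have hsub : (Finset.univ.filter (fun p => (Fcr F z S r0).crash p ≠ none)) ⊆
      insert z (Finset.univ.filter (fun p => F.crash p ≠ none)) := by
    intro p hp
    simp only [Finset.mem_filter, Finset.mem_univ, true_and] at hp
    by_cases hz : p = z
    · simp [hz]
    · simp only [Fcr, if_neg hz] at hp
      simp [Finset.mem_insert, Finset.mem_filter, hp]
  calc (Fcr F z S r0).numFaulty ≤ (insert z (Finset.univ.filter (fun p => F.crash p ≠ none))).card :=
        Finset.card_le_card hsub
    _ ≤ F.numFaulty + 1 := by
        rw [FailPattern.numFaulty]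
        exact Finset.card_insert_le _ _

/-- A one-round sparse extension adds at most one crash. -/
lemma numFaulty_one_ext {F F₁ : FailPattern n} {k R : ℕ} (h : SExt F F₁ k R)
    (hfin : Finished F₁ (k+1)) : F₁.numFaulty ≤ F.numFaulty + 1 := by
  classical
  set A := Finset.univ.filter (fun p => F.crash p ≠ none) with hA
  set B := Finset.univ.filter (fun p => F.crash p = none ∧ F₁.crash p ≠ none) with hB
  have hsub : (Finset.univ.filter (fun p => F₁.crash p ≠ none)) ⊆ A ∪ B := by
    intro p hp
    simp only [Finset.mem_filter, Finset.mem_univ, true_and] at hp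
    rcases hF : F.crash p with _ | rc
    · simp [hB, Finset.mem_union, Finset.mem_filter, hF, hp]
    · simp [hA, Finset.mem_union, Finset.mem_filter, hF]
  have hBcard : B.card ≤ 1 := by
    rw [Finset.card_le_one]
    intro a ha b hb
    simp only [hB, Finset.mem_filter, Finset.mem_univ, true_and] at ha hb
    rcases h1 : F₁.crash a with _ | ra
    · exact absurd h1 ha.2
    · rcases h2 : F₁.crash b with _ | rb
      · exact absurd h2 hb.2
      · have hra : ra = k + 1 := by
          have := h.new a ra ha.1 h1
          have := hfin a ra h1
          omega
        have hrb : rb = k + 1 := by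
          have := h.new b rb hb.1 h2
          have := hfin b rb h2
          omega
        exact h.sparse a b (k+1) ha.1 hb.1 (hra ▸ h1) (hrb ▸ h2)
  calc F₁.numFaulty ≤ (A ∪ B).card := Finset.card_le_card hsub
    _ ≤ A.card + B.card := Finset.card_union_le _ _
    _ ≤ F.numFaulty + 1 := by
        have hAc : A.card = F.numFaulty := rfl
        omega

end LB
namespace LB

variable {n : ℕ}

/-- Value `b` is reachable from the round-`k` configuration `(x, F)`. -/
def ValB (P : SyncProtocol n) (R : ℕ) (x : Fin n → Bool) (F : FailPattern n) (k : ℕ)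
    (b : Bool) : Prop :=
  ∃ G, SExt F G k R ∧ dec P R x G = b

def Biv (P : SyncProtocol n) (R : ℕ) (x : Fin n → Bool) (F : FailPattern n) (k : ℕ) : Prop :=
  ValB P R x F k true ∧ ValB P R x F k false

lemma univ_of_not_biv {P : SyncProtocol n} {R : ℕ} {x : Fin n → Bool} {F : FailPattern n}
    {k : ℕ} (h : ¬ Biv P R x F k) : ∀ G, SExt F G k R → dec P R x G = dec P R x F := by
  intro G hG
  by_contra hne
  apply h
  cases hd : dec P R x F with
  | true =>
    refine ⟨⟨F, SExt.refl F k R, hd⟩, ⟨G, hG, ?_⟩⟩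
    cases hG' : dec P R x G
    · rfl
    · rw [hG', hd] at hne; exact absurd rfl hne
  | false =>
    refine ⟨⟨G, hG, ?_⟩, ⟨F, SExt.refl F k R, hd⟩⟩
    cases hG' : dec P R x G
    · rw [hG', hd] at hne; exact absurd rfl hne
    · rfl

lemma numFaulty_eq_of_crash_eq {F G : FailPattern n} (h : ∀ p, G.crash p = F.crash p) :
    G.numFaulty = F.numFaulty := by
  simp only [FailPattern.numFaulty]
  congr 1
  apply Finset.filter_congr
  intro p _
  rw [h p]

/-- Bivalence is impossible at round `R`. -/
lemma biv_R_false {P : SyncProtocol n} {f R : ℕ} (hP : SolvesConsensus P f R)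
    (hn : f + 2 ≤ n) (hRf : R ≤ f) {x : Fin n → Bool} {F : FailPattern n}
    (hnum : F.numFaulty ≤ R) : ¬ Biv P R x F R := by
  rintro ⟨⟨Gt, hGt, hdt⟩, ⟨Gf, hGf, hdf⟩⟩
  have hFf : F.numFaulty ≤ f := le_trans hnum hRf
  have key : ∀ G, SExt F G R R → dec P R x G = dec P R x F := by
    intro G hG
    have hcr := hG.crash_eq_of_top
    have hnumG : G.numFaulty ≤ f := by rw [numFaulty_eq_of_crash_eq hcr]; exact hFf
    obtain ⟨w, hw⟩ := numFaulty_lt G hnumG (by omega)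
    have hwF : F.Nonfaulty w := by rw [FailPattern.Nonfaulty, ← hcr w]; exact hw
    exact dec_eq_common hP hnumG hFf hw hwF
      (run_ok_eq P x (fun p q r _ hr => hG.ok_agree p q r hr) R le_rfl w).symm
  rw [key Gt hGt] at hdt
  rw [key Gf hGf] at hdf
  rw [hdt] at hdf
  exact Bool.noConfusion hdf

/-- Validity: with constant inputs `c`, the decision is `c`. -/
lemma dec_const {P : SyncProtocol n} {f R : ℕ} (hP : SolvesConsensus P f R)
    (hn : f + 2 ≤ n) {x : Fin n → Bool} {F : FailPattern n} {c : Bool}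
    (hnum : F.numFaulty ≤ f) (hx : ∀ q, x q = c) : dec P R x F = c := by
  obtain ⟨p, hp⟩ := numFaulty_lt F hnum (by omega)
  obtain ⟨q, hq⟩ := (hP x F hnum).2.2 p _ hp (dec_spec hP hnum hp)
  rw [← hq, hx q]

/-- The failure-free pattern. -/
def F0 (n : ℕ) : FailPattern n := ⟨fun _ => none, fun _ _ => False⟩

lemma F0_numFaulty : (F0 n).numFaulty = 0 := by
  simp [FailPattern.numFaulty, F0]

lemma F0_finished (k : ℕ) : Finished (F0 n) k := by
  intro p r h
  exact (by cases h)

/-- The chain of input assignments. -/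
def xseq (n j : ℕ) : Fin n → Bool := fun i => decide ((i : ℕ) < j)

lemma chain_const {d : ℕ → Bool} (h : ∀ j, d j = d (j + 1)) : ∀ m, d m = d 0 := by
  intro m
  induction m with
  | zero => rfl
  | succ m ih => rw [← h m, ih]

lemma xseq_stall {j : ℕ} (hj : ¬ j < n) : xseq n j = xseq n (j + 1) := by
  funext i
  simp only [xseq]
  have : (i : ℕ) < n := i.isLt
  apply decide_eq_decide.2
  omega

lemma xseq_ne {j : ℕ} (hj : j < n) {p : Fin n} (hp : p ≠ ⟨j, hj⟩) :
    xseq n j p = xseq n (j + 1) p := by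
  have : (p : ℕ) ≠ j := by
    intro hc
    exact hp (Fin.ext hc)
  simp only [xseq]
  apply decide_eq_decide.2
  omega

/-- Chain contradiction for `R = 0`. -/
lemma R0_false {P : SyncProtocol n} {f : ℕ} (hP : SolvesConsensus P f 0)
    (hn : f + 2 ≤ n) : False := by
  set d : ℕ → Bool := fun j => dec P 0 (xseq n j) (F0 n) with hd
  have hnum : (F0 n).numFaulty ≤ f := by rw [F0_numFaulty]; omega
  have hstep : ∀ j, d j = d (j + 1) := by
    intro j
    by_cases hj : j < n
    · have hz : (⟨j, hj⟩ : Fin n) ≠ ⟨j, hj⟩ → False := fun h => h rfl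
      obtain ⟨w, hwz, hw⟩ := exists_nonfaulty_ne (F0 n) hnum (by omega) ⟨j, hj⟩
      have hrun := (master P (xseq n j) (xseq n (j+1)) (F0 n) (F0 n) ⟨j, hj⟩ 0 0
        (fun p hp => xseq_ne hj hp) (by omega)
        (fun p q r _ _ _ _ => Iff.rfl)
        (fun q r _ h1 h2 _ => Iff.rfl)
        (fun q r _ h1 h2 => by omega)
        (fun p r h1 h2 _ => by omega)
        0 le_rfl).1 w hwz
      exact dec_eq_common hP hnum hnum hw hw hrun
    · rw [hd]
      simp only
      rw [xseq_stall hj]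
  have h0 : d 0 = false := dec_const hP hn hnum (fun q => by simp [xseq])
  have h1 : d n = true := dec_const hP hn hnum (fun q => by simp [xseq, q.isLt])
  rw [chain_const hstep n, h0] at h1
  exact Bool.noConfusion h1

/-- There is a bivalent initial configuration. -/
lemma biv_init {P : SyncProtocol n} {f R : ℕ} (hP : SolvesConsensus P f R)
    (hn : f + 2 ≤ n) (hRf : R ≤ f) (hR1 : 1 ≤ R) :
    ∃ x : Fin n → Bool, Biv P R x (F0 n) 0 := by
  by_contra hnb
  push_neg at hnb
  have hU : ∀ (x : Fin n → Bool) G, SExt (F0 n) G 0 R → dec P R x G = dec P R x (F0 n) :=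
    fun x => univ_of_not_biv (hnb x)
  set d : ℕ → Bool := fun j => dec P R (xseq n j) (F0 n) with hd
  have hnum0 : (F0 n).numFaulty ≤ f := by rw [F0_numFaulty]; omega
  have hstep : ∀ j, d j = d (j + 1) := by
    intro j
    by_cases hj : j < n
    · set z : Fin n := ⟨j, hj⟩ with hzdef
      set Fz : FailPattern n := Fcr (F0 n) z (fun _ => False) 1 with hFz
      have hsext : SExt (F0 n) Fz 0 R := by
        refine ⟨?_, ?_, ?_, ?_⟩
        · intro p r h; exact (by cases h)
        · intro p r q h; exact (by cases h)
        · intro p r _ hG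
          simp only [hFz, Fcr] at hG
          by_cases hpz : p = z
          · rw [if_pos hpz] at hG
            injection hG with hG
            omega
          · rw [if_neg hpz] at hG
            exact (by cases hG)
        · intro p q r _ _ hGp hGq
          simp only [hFz, Fcr] at hGp hGq
          by_cases hpz : p = z <;> by_cases hqz : q = z
          · rw [hpz, hqz]
          · rw [if_neg hqz] at hGq; exact (by cases hGq)
          · rw [if_neg hpz] at hGp; exact (by cases hGp)
          · rw [if_neg hpz] at hGp; exact (by cases hGp)
      have hnumz : Fz.numFaulty ≤ f := by
        have h1 : Fz.numFaulty ≤ (F0 n).numFaulty + 1 := by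
          rw [hFz]; exact numFaulty_Fcr_le _ _ _ _
        rw [F0_numFaulty] at h1
        omega
      have hcrz : Fz.crash z = some 1 := by simp [hFz, Fcr]
      have hnsil : ∀ q r, q ≠ z → 0 < r → r ≤ R → ¬ Fz.ok z q r ∧ ¬ Fz.ok z q r := by
        intro q r _ hr _
        have : ¬ Fz.ok z q r := by
          simp only [FailPattern.ok, hcrz]
          rintro (h1 | ⟨h1, h2⟩)
          · omega
          · simp [hFz, Fcr] at h2
        exact ⟨this, this⟩
      obtain ⟨w, hw⟩ := numFaulty_lt Fz hnumz (by omega)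
      have hwz : w ≠ z := by
        intro hc
        rw [FailPattern.Nonfaulty, hc, hcrz] at hw
        exact (by cases hw)
      have hrun := (master P (xseq n j) (xseq n (j+1)) Fz Fz z 0 R
        (fun p hp => xseq_ne hj hp) (by omega)
        (fun p q r _ _ _ _ => Iff.rfl)
        (fun q r _ h1 h2 _ => by omega)
        hnsil
        (fun p r h1 h2 _ => by omega)
        R le_rfl).1 w hwz
      have hmid : dec P R (xseq n j) Fz = dec P R (xseq n (j+1)) Fz :=
        dec_eq_common hP hnumz hnumz hw hw hrun
      calc d j = dec P R (xseq n j) Fz := (hU _ Fz hsext).symm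
        _ = dec P R (xseq n (j+1)) Fz := hmid
        _ = d (j + 1) := hU _ Fz hsext
    · rw [hd]
      simp only
      rw [xseq_stall hj]
  have h0 : d 0 = false := dec_const hP hn hnum0 (fun q => by simp [xseq])
  have h1 : d n = true := dec_const hP hn hnum0 (fun q => by simp [xseq, q.isLt])
  rw [chain_const hstep n, h0] at h1
  exact Bool.noConfusion h1

end LB
namespace LB

variable {n : ℕ}

lemma ok_iff_of {F F' : FailPattern n} {a : Fin n} (b : Fin n) (r : ℕ)
    (hc : F'.crash a = F.crash a)
    (hd : ∀ rc, F.crash a = some rc → (F'.deliv a b ↔ F.deliv a b)) :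
    F.ok a b r ↔ F'.ok a b r := by
  rcases h : F.crash a with _ | rc
  · rw [h] at hc
    simp [FailPattern.ok, h, hc]
  · rw [h] at hc
    have hdel := hd rc h
    simp only [FailPattern.ok, h, hc]
    constructor
    · rintro (h1 | ⟨h1, h2⟩)
      · exact Or.inl h1
      · exact Or.inr ⟨h1, hdel.2 h2⟩
    · rintro (h1 | ⟨h1, h2⟩)
      · exact Or.inl h1
      · exact Or.inr ⟨h1, hdel.1 h2⟩

lemma Fcr_crash_self (F : FailPattern n) (z : Fin n) (S : Fin n → Prop) (r0 : ℕ) :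
    (Fcr F z S r0).crash z = some r0 := if_pos rfl

lemma Fcr_crash_other (F : FailPattern n) {z a : Fin n} (S : Fin n → Prop) (r0 : ℕ)
    (haz : a ≠ z) : (Fcr F z S r0).crash a = F.crash a := if_neg haz

lemma Fcr_ok_self (F : FailPattern n) (z : Fin n) (S : Fin n → Prop) (r0 : ℕ)
    (b : Fin n) (r : ℕ) :
    (Fcr F z S r0).ok z b r ↔ (r < r0 ∨ (r = r0 ∧ S b)) := by
  have h1 : (Fcr F z S r0).crash z = some r0 := if_pos rfl
  have h2 : (Fcr F z S r0).deliv z b = S b := if_pos rfl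
  simp [FailPattern.ok, h1, h2]

lemma Fcr_ok_other (F : FailPattern n) {z a : Fin n} (S : Fin n → Prop) (r0 : ℕ)
    (haz : a ≠ z) (b : Fin n) (r : ℕ) :
    (Fcr F z S r0).ok a b r ↔ F.ok a b r :=
  (ok_iff_of b r (Fcr_crash_other F S r0 haz)
    (fun _ _ => by simp [Fcr, if_neg haz])).symm

lemma sext_Fcr {F : FailPattern n} {z : Fin n} (S : Fin n → Prop) {k R r0 : ℕ}
    (hz : F.crash z = none) (hk : k < r0) (hR : r0 ≤ R) :
    SExt F (Fcr F z S r0) k R := by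
  have hcrash : ∀ c, F.crash c = none → ∀ r, (Fcr F z S r0).crash c = some r → c = z := by
    intro c hc r hcr
    by_contra hcz
    rw [Fcr_crash_other F S r0 hcz, hc] at hcr
    exact (by cases hcr)
  refine ⟨?_, ?_, ?_, ?_⟩
  · intro a r h
    have haz : a ≠ z := fun hc => by rw [hc, hz] at h; exact (by cases h)
    rw [Fcr_crash_other F S r0 haz]; exact h
  · intro a r b h
    have haz : a ≠ z := fun hc => by rw [hc, hz] at h; exact (by cases h)
    simp [Fcr, if_neg haz]
  · intro a r hFa h
    have haz := hcrash a hFa r h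
    subst haz
    rw [Fcr_crash_self] at h
    injection h with h
    omega
  · intro a b r hFa hFb ha hb
    rw [hcrash a hFa r ha, hcrash b hFb r hb]

lemma dec_eq_of_same {P : SyncProtocol n} {f R : ℕ} (hP : SolvesConsensus P f R)
    (hfn : f < n) {x : Fin n → Bool} {F F' : FailPattern n}
    (hF : F.numFaulty ≤ f) (hF' : F'.numFaulty ≤ f)
    (hok : ∀ a b r, 1 ≤ r → r ≤ R → (F.ok a b r ↔ F'.ok a b r))
    (hcr : ∀ a, F.Nonfaulty a → F'.Nonfaulty a) :
    dec P R x F = dec P R x F' := by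
  obtain ⟨w, hw⟩ := numFaulty_lt F hF hfn
  exact dec_eq_common hP hF hF' hw (hcr w hw) (run_ok_eq P x hok R le_rfl w)

/-- The inductive step: a bivalent round-`k` configuration has a bivalent
one-round extension. -/
lemma biv_step {P : SyncProtocol n} {f R : ℕ} (hP : SolvesConsensus P f R)
    (hn : f + 2 ≤ n) (hRf : R ≤ f) {x : Fin n → Bool} {F : FailPattern n} {k : ℕ}
    (hk : k < R) (hFin : Finished F k) (hnum : F.numFaulty ≤ k) (hbiv : Biv P R x F k) :
    ∃ F', Finished F' (k + 1) ∧ F'.numFaulty ≤ k + 1 ∧ Biv P R x F' (k + 1) := by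
  by_contra hcon
  push_neg at hcon
  have U : ∀ F', Finished F' (k + 1) → F'.numFaulty ≤ k + 1 →
      ∀ G, SExt F' G (k + 1) R → dec P R x G = dec P R x F' :=
    fun F' h1 h2 => univ_of_not_biv (hcon F' h1 h2)
  have hFink1 : Finished F (k + 1) := fun p r h => le_trans (hFin p r h) (by omega)
  have hFf : F.numFaulty ≤ f := by omega
  obtain ⟨⟨Gt, hGt, hdt⟩, ⟨Gf, hGf, hdf⟩⟩ := hbiv
  -- truncation: every reachable value is achieved by a one-round extension
  have hmk : ∀ G, SExt F G k R → ∃ F₁, SExt F F₁ k R ∧ Finished F₁ (k + 1) ∧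
      F₁.numFaulty ≤ k + 1 ∧ dec P R x F₁ = dec P R x G := by
    intro G hG
    obtain ⟨h1, h2⟩ := sext_trunc hG hFin (by omega)
    have hfin' := trunc_finished G (k + 1)
    have hnum' : (trunc G (k + 1)).numFaulty ≤ k + 1 := by
      have := numFaulty_one_ext h1 hfin'; omega
    exact ⟨trunc G (k + 1), h1, hfin', hnum', (U _ hfin' hnum' G h2).symm⟩
  obtain ⟨Ft, hFt, hFtFin, hFtNum, hFtd⟩ := hmk Gt hGt
  obtain ⟨Ff, hFf', hFfFin, hFfNum, hFfd⟩ := hmk Gf hGf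
  -- a one-round extension deciding the opposite of `F`'s own decision
  obtain ⟨F₁, hS1, hFin1, hNum1, hd1⟩ :
      ∃ F₁, SExt F F₁ k R ∧ Finished F₁ (k + 1) ∧ F₁.numFaulty ≤ k + 1 ∧
        dec P R x F₁ = !(dec P R x F) := by
    cases hv : dec P R x F with
    | true => exact ⟨Ff, hFf', hFfFin, hFfNum, by simp [hFfd, hdf]⟩
    | false => exact ⟨Ft, hFt, hFtFin, hFtNum, by simp [hFtd, hdt]⟩
  have hNum1f : F₁.numFaulty ≤ f := by omega
  -- F₁ must crash some fresh process (else it decides as F does)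
  by_cases hex : ∃ p, F.crash p = none ∧ F₁.crash p ≠ none
  case neg =>
    have hcr : ∀ a, F₁.crash a = F.crash a := by
      intro a
      rcases hF : F.crash a with _ | rc
      · by_contra hc
        exact hex ⟨a, hF, hc⟩
      · exact hS1.old a rc hF
    have : dec P R x F₁ = dec P R x F := by
      refine dec_eq_of_same hP (by omega) hNum1f hFf ?_ ?_
      · intro a b r _ _
        exact ok_iff_of b r (hcr a).symm (fun rc h => by
          rw [hcr a] at h
          exact (hS1.olddel a rc b h).symm)
      · intro a ha
        rw [FailPattern.Nonfaulty, ← hcr a]; exact ha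
    rw [hd1] at this
    exact absurd this (by cases dec P R x F <;> simp)
  case pos =>
    obtain ⟨p, hFp, hF1p⟩ := hex
    obtain ⟨r₁, hr₁⟩ : ∃ r, F₁.crash p = some r := by
      rcases h : F₁.crash p with _ | rc
      · exact absurd h hF1p
      · exact ⟨rc, rfl⟩
    have hr1k : r₁ = k + 1 := by
      have := hS1.new p r₁ hFp hr₁
      have := hFin1 p r₁ hr₁
      omega
    rw [hr1k] at hr₁
    -- the family of one-round extensions crashing `p` in round `k+1`
    set Φ : Finset (Fin n) → FailPattern n :=
      fun T => Fcr F p (fun q => q ∈ T) (k + 1) with hΦ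
    have hΦS : ∀ T, SExt F (Φ T) k R := fun T =>
      sext_Fcr _ hFp (by omega) (by omega)
    have hΦFin : ∀ T, Finished (Φ T) (k + 1) := by
      intro T a r h
      by_cases hap : a = p
      · subst hap
        rw [Fcr_crash_self] at h
        injection h with h; omega
      · rw [Fcr_crash_other F _ _ hap] at h
        exact le_trans (hFin a r h) (by omega)
    have hΦNum : ∀ T, (Φ T).numFaulty ≤ k + 1 := fun T =>
      le_trans (numFaulty_Fcr_le F p _ (k + 1)) (by omega)
    have hΦNumf : ∀ T, (Φ T).numFaulty ≤ f := fun T => le_trans (hΦNum T) (by omega)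
    have hΦcrash_eq : ∀ T T' a, (Φ T).crash a = (Φ T').crash a := fun T T' a => rfl
    -- message deliveries of the two patterns agree except from p to the new element
    have hBb : ∀ (T : Finset (Fin n)) (q : Fin n), q ∉ T →
        ∀ s w r, w ≠ q → ((Φ T).ok s w r ↔ (Φ (insert q T)).ok s w r) := by
      intro T q _ s w r hwq
      by_cases hsp : s = p
      · subst hsp
        rw [Fcr_ok_self, Fcr_ok_self]
        have : w ∈ T ↔ w ∈ insert q T := by
          simp [Finset.mem_insert, hwq]
        rw [this]
      · rw [Fcr_ok_other F _ _ hsp, Fcr_ok_other F _ _ hsp]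
    have hBe : ∀ (T : Finset (Fin n)) (q : Fin n),
        ∀ s w r, r < k + 1 → ((Φ T).ok s w r ↔ (Φ (insert q T)).ok s w r) := by
      intro T q s w r hr
      by_cases hsp : s = p
      · subst hsp
        rw [Fcr_ok_self, Fcr_ok_self]
        constructor <;> intro _ <;> exact Or.inl hr
      · rw [Fcr_ok_other F _ _ hsp, Fcr_ok_other F _ _ hsp]
    -- Claim A : inserting one more delivered message does not change the decision
    have claimA : ∀ (T : Finset (Fin n)) (q : Fin n),
        dec P R x (Φ (insert q T)) = dec P R x (Φ T) := by
      intro T q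
      by_cases hqT : q ∈ T
      · rw [Finset.insert_eq_self.2 hqT]
      · -- case 1 : q is already silent after round k+1 in both patterns
        by_cases hqdead : q = p ∨ F.crash q ≠ none
        · have hdead : ∀ w r, k + 1 < r → ¬ (Φ T).ok q w r ∧ ¬ (Φ (insert q T)).ok q w r := by
            intro w r hr
            rcases hqdead with hqp | hqc
            · subst hqp
              constructor <;>
                · rw [Fcr_ok_self]
                  rintro (h1 | ⟨h1, _⟩) <;> omega
            · rcases hc : F.crash q with _ | rc
              · exact absurd hc hqc
              · have hrc := hFin q rc hc
                have hqp : q ≠ p := fun hc' => by rw [hc', hFp] at hc; exact (by cases hc)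
                constructor <;>
                  · rw [Fcr_ok_other F _ _ hqp]
                    simp only [FailPattern.ok, hc]
                    rintro (h1 | ⟨h1, _⟩) <;> omega
          have hrun := master P x x (Φ T) (Φ (insert q T)) q (k + 1) R
            (fun _ _ => rfl) (fun _ => rfl)
            (fun s w r hs hw h1 h2 => hBb T q hqT s w r hw)
            (fun w r hw h1 h2 h3 => hBb T q hqT q w r hw)
            (fun w r hw h1 h2 => hdead w r h1)
            (fun s r h1 h2 h3 => hBe T q s q r h2)
          have hqfaulty : ¬ (Φ T).Nonfaulty q := by
            rcases hqdead with hqp | hqc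
            · subst hqp
              rw [FailPattern.Nonfaulty, Fcr_crash_self]
              exact fun hc => (by cases hc)
            · rcases hc : F.crash q with _ | rc
              · exact absurd hc hqc
              · have hqp : q ≠ p := fun hc' => by rw [hc', hFp] at hc; exact (by cases hc)
                rw [FailPattern.Nonfaulty, Fcr_crash_other F _ _ hqp, hc]
                exact fun hc' => (by cases hc')
          obtain ⟨w, hw⟩ := numFaulty_lt (Φ T) (hΦNumf T) (by omega)
          have hwq : w ≠ q := fun hc => hqfaulty (hc ▸ hw)
          have hw' : (Φ (insert q T)).Nonfaulty w := by
            rw [FailPattern.Nonfaulty, ← hΦcrash_eq T (insert q T) w]; exact hw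
          exact (dec_eq_common hP (hΦNumf T) (hΦNumf (insert q T)) hw hw'
            ((hrun R le_rfl).1 w hwq)).symm
        · push_neg at hqdead
          obtain ⟨hqp, hqc⟩ := hqdead
          by_cases hlast : k + 1 = R
          · -- final round : compare the two patterns directly
            have hrun := master P x x (Φ T) (Φ (insert q T)) q (k + 1) R
              (fun _ _ => rfl) (fun _ => rfl)
              (fun s w r hs hw h1 h2 => hBb T q hqT s w r hw)
              (fun w r hw h1 h2 h3 => hBb T q hqT q w r hw)
              (fun w r hw h1 h2 => False.elim (by omega))
              (fun s r h1 h2 h3 => hBe T q s q r h2)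
            obtain ⟨w, hwq, hw⟩ := exists_nonfaulty_ne (Φ T) (hΦNumf T) (by omega) q
            have hw' : (Φ (insert q T)).Nonfaulty w := by
              rw [FailPattern.Nonfaulty, ← hΦcrash_eq T (insert q T) w]; exact hw
            exact (dec_eq_common hP (hΦNumf T) (hΦNumf (insert q T)) hw hw'
              ((hrun R le_rfl).1 w hwq)).symm
          · -- intermediate round : additionally crash q at round k+2, silently
            have hk2R : k + 2 ≤ R := by omega
            set Ψ : Finset (Fin n) → FailPattern n :=
              fun T' => Fcr (Φ T') q (fun _ => False) (k + 2) with hΨ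
            have hΦq : ∀ T', (Φ T').crash q = none := by
              intro T'
              rw [Fcr_crash_other F _ _ hqp]; exact hqc
            have hΨsext : ∀ T', SExt (Φ T') (Ψ T') (k + 1) R :=
              fun T' => sext_Fcr _ (hΦq T') (by omega) hk2R
            have hΨnum : ∀ T', (Ψ T').numFaulty ≤ f := by
              intro T'
              have h1 : (Ψ T').numFaulty ≤ (Φ T').numFaulty + 1 := by
                rw [hΨ]
                exact numFaulty_Fcr_le _ _ _ _
              have h2 := hΦNum T'
              omega
            have hΨdec : ∀ T', dec P R x (Ψ T') = dec P R x (Φ T') :=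
              fun T' => U (Φ T') (hΦFin T') (hΦNum T') (Ψ T') (hΨsext T')
            have hrun := master P x x (Ψ T) (Ψ (insert q T)) q (k + 1) R
              (fun _ _ => rfl) (fun _ => rfl)
              (fun s w r hs hw h1 h2 => by
                by_cases hsq : s = q
                · subst hsq
                  rw [Fcr_ok_self, Fcr_ok_self]
                · rw [Fcr_ok_other (Φ T) _ _ hsq, Fcr_ok_other (Φ (insert q T)) _ _ hsq]
                  exact hBb T q hqT s w r hw)
              (fun w r hw h1 h2 h3 => by
                rw [Fcr_ok_self, Fcr_ok_self])
              (fun w r hw h1 h2 => by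
                constructor <;>
                  · rw [Fcr_ok_self]
                    rintro (h3 | ⟨h3, h4⟩)
                    · omega
                    · exact h4)
              (fun s r h1 h2 h3 => by
                by_cases hsq : s = q
                · subst hsq
                  rw [Fcr_ok_self, Fcr_ok_self]
                · rw [Fcr_ok_other (Φ T) _ _ hsq, Fcr_ok_other (Φ (insert q T)) _ _ hsq]
                  exact hBe T q s q r h2)
            obtain ⟨w, hw⟩ := numFaulty_lt (Ψ T) (hΨnum T) (by omega)
            have hwq : w ≠ q := by
              intro hc
              rw [FailPattern.Nonfaulty, hc, Fcr_crash_self] at hw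
              exact (by cases hw)
            have hw' : (Ψ (insert q T)).Nonfaulty w := by
              rw [FailPattern.Nonfaulty, Fcr_crash_other (Φ (insert q T)) _ _ hwq,
                ← hΦcrash_eq T (insert q T) w,
                ← Fcr_crash_other (Φ T) (fun _ => False) (k + 2) hwq]
              exact hw
            have := dec_eq_common hP (hΨnum T) (hΨnum (insert q T)) hw hw'
              ((hrun R le_rfl).1 w hwq)
            rw [hΨdec T, hΨdec (insert q T)] at this
            exact this.symm
    -- Claim A implies all delivery sets give the same decision
    have claimU : ∀ T' T : Finset (Fin n), dec P R x (Φ (T ∪ T')) = dec P R x (Φ T) := by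
      intro T'
      induction T' using Finset.induction_on with
      | empty => intro T; rw [Finset.union_empty]
      | @insert a T' ha ih =>
        intro T
        rw [Finset.union_insert, claimA (T ∪ T') a, ih T]
    -- the actual delivery set of F₁
    set S₀ : Finset (Fin n) := Finset.univ.filter (fun q => F₁.deliv p q) with hS₀
    -- Claim C0 : F₁ behaves as Φ S₀
    have hcr10 : ∀ a, (Φ S₀).crash a = F₁.crash a := by
      intro a
      by_cases hap : a = p
      · subst hap
        rw [Fcr_crash_self, hr₁]
      · rw [Fcr_crash_other F _ _ hap]
        rcases hF : F.crash a with _ | rc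
        · rcases h1 : F₁.crash a with _ | rc'
          · rfl
          · have h2 := hS1.new a rc' hF h1
            have h3 := hFin1 a rc' h1
            have hrc' : rc' = k + 1 := by omega
            rw [hrc'] at h1
            exact absurd (hS1.sparse a p (k + 1) hF hFp h1 hr₁) hap
        · exact (hS1.old a rc hF).symm
    have hC0 : dec P R x F₁ = dec P R x (Φ S₀) := by
      refine dec_eq_of_same hP (by omega) hNum1f (hΦNumf S₀) ?_ ?_
      · intro a b r _ _
        refine ok_iff_of b r (hcr10 a) ?_
        intro rc hc
        by_cases hap : a = p
        · rw [hap]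
          simp [hΦ, Fcr, hS₀]
        · have hFa : F.crash a = some rc := by
            rcases hF : F.crash a with _ | rc'
            · rw [← hcr10 a, Fcr_crash_other F _ _ hap, hF] at hc
              exact (by cases hc)
            · rw [← hcr10 a, Fcr_crash_other F _ _ hap, hF] at hc
              injection hc with hc
              rw [hc]
          have h1 := hS1.olddel a rc b hFa
          have h2 : (Φ S₀).deliv a b = F.deliv a b := by
            simp [hΦ, Fcr, if_neg hap]
          rw [h2]
          exact h1.symm
      · intro a ha
        rw [FailPattern.Nonfaulty, hcr10 a]; exact ha
    -- Claim B : full delivery behaves as F itself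
    have hBfull : dec P R x (Φ Finset.univ) = dec P R x F := by
      by_cases hlast : k + 1 = R
      · refine dec_eq_of_same hP (by omega) (hΦNumf Finset.univ) hFf ?_ ?_
        · intro a b r h1 h2
          by_cases hap : a = p
          · rw [hap, Fcr_ok_self]
            have hFok : F.ok p b r := by simp [FailPattern.ok, hFp]
            constructor
            · intro _; exact hFok
            · intro _
              simp only [Finset.mem_univ, and_true]
              omega
          · rw [Fcr_ok_other F _ _ hap]
        · intro a ha
          by_cases hap : a = p
          · rw [hap] at ha
            rw [FailPattern.Nonfaulty, Fcr_crash_self] at ha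
            exact (by cases ha)
          · rw [FailPattern.Nonfaulty, Fcr_crash_other F _ _ hap] at ha
            exact ha
      · have hk2R : k + 2 ≤ R := by omega
        set G₀ : FailPattern n := Fcr F p (fun _ => False) (k + 2) with hG₀
        have hSG0 : SExt F G₀ (k + 1) R := sext_Fcr _ hFp (by omega) hk2R
        have hdG0 : dec P R x G₀ = dec P R x F :=
          U F hFink1 (by omega) G₀ hSG0
        have hstep2 : dec P R x (Φ Finset.univ) = dec P R x G₀ := by
          refine dec_eq_of_same hP (by omega) (hΦNumf Finset.univ) ?_ ?_ ?_
          · have h1 : G₀.numFaulty ≤ F.numFaulty + 1 := by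
              rw [hG₀]
              exact numFaulty_Fcr_le _ _ _ _
            omega
          · intro a b r h1 h2
            by_cases hap : a = p
            · rw [hap, Fcr_ok_self, Fcr_ok_self]
              simp only [Finset.mem_univ, and_true]
              constructor
              · intro h; omega
              · rintro (h | ⟨h, hfalse⟩)
                · omega
                · exact absurd hfalse not_false
            · rw [Fcr_ok_other F _ _ hap, Fcr_ok_other F _ _ hap]
          · intro a ha
            by_cases hap : a = p
            · rw [hap] at ha
              rw [FailPattern.Nonfaulty, Fcr_crash_self] at ha
              exact (by cases ha)
            · rw [FailPattern.Nonfaulty, Fcr_crash_other F _ _ hap] at ha ⊢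
              exact ha
        rw [hstep2, hdG0]
    -- assemble the contradiction
    have hchain : dec P R x (Φ S₀) = dec P R x (Φ Finset.univ) := by
      have h1 := claimU Finset.univ S₀
      have h2 : S₀ ∪ Finset.univ = Finset.univ := by simp
      rw [h2] at h1
      exact h1.symm
    have : (!(dec P R x F)) = dec P R x F := by
      rw [← hd1, hC0, hchain, hBfull]
    exact absurd this (by cases dec P R x F <;> simp)

end LB
/-- **Round lower bound for crash-fault consensus.** Any consensus algorithm
for `n ≥ f + 2` processes tolerating `f` crash failures requires at least
`f + 1` rounds in some admissible execution. -/
theorem consensus_round_lower_bound (n f R : ℕ) (hn : f + 2 ≤ n)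
    (P : SyncProtocol n) (hP : SolvesConsensus P f R) : f + 1 ≤ R := by
  by_contra h
  push_neg at h
  have hRf : R ≤ f := by omega
  rcases Nat.eq_zero_or_pos R with hR0 | hR1
  · subst hR0
    exact LB.R0_false hP hn
  · obtain ⟨x, hbiv0⟩ := LB.biv_init hP hn hRf hR1
    have hind : ∀ k, k ≤ R → ∃ F, LB.Finished F k ∧ F.numFaulty ≤ k ∧ LB.Biv P R x F k := by
      intro k
      induction k with
      | zero => intro _; exact ⟨LB.F0 n, LB.F0_finished 0, by simp [LB.F0_numFaulty], hbiv0⟩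
      | succ k ih =>
        intro hk
        obtain ⟨F, h1, h2, h3⟩ := ih (by omega)
        obtain ⟨F', h1', h2', h3'⟩ := LB.biv_step hP hn hRf (by omega) h1 h2 h3
        exact ⟨F', h1', h2', h3'⟩
    obtain ⟨F, h1, h2, h3⟩ := hind R le_rfl
    exact LB.biv_R_false hP hn hRf h2 h3
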